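/- Let n > 0 and let 0 < y1 < y2. Suppose Y is continuously differentiable on [y1, y2], twice differentiable on (y1, y2), satisfies y·Y''(y) − Y'(y) + (1/(2n+3))·y²·N_n(Y(y)) = 0 on (y1, y2), Y'(y1) = Y'(y2) = 0, and Y is not identically zero on [y1, y2]. Then y2²·|Y(y2)|^{(n+2)/(n+1)} > y1²·|Y(y1)|^{(n+2)/(n+1)}; in particular, if Y(y1) ≠ 0 then ( |Y(y2)| / |Y(y1)| )^{(n+2)/(n+1)} > (y1/y2)². -/

import Mathlib

/-- The odd power nonlinearity `N_n(Y) = |Y|^{-n/(n+1)}·Y` (with `N_n(0) = 0`). -/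
noncomputable def Nn (n Y : ℝ) : ℝ := |Y| ^ (-(n / (n + 1))) * Y

open Real Filter Set

open Real Filter Set

lemma absRpow_hasDerivAt {p : ℝ} (hp : 1 < p) (x : ℝ) :
    HasDerivAt (fun t => |t| ^ p) (p * |x| ^ (p - 2) * x) x := by
  rcases lt_trichotomy x 0 with hx | hx | hx
  · have hne : -x ≠ 0 := neg_ne_zero.2 (ne_of_lt hx)
    have h1 : HasDerivAt (fun t : ℝ => (-t) ^ p) (p * (-x) ^ (p - 1) * (-1)) x :=
      (Real.hasDerivAt_rpow_const (p := p) (Or.inl hne)).comp x (hasDerivAt_neg x)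
    have heq : (fun t : ℝ => |t| ^ p) =ᶠ[nhds x] (fun t : ℝ => (-t) ^ p) := by
      filter_upwards [Iio_mem_nhds hx] with t ht
      rw [abs_of_neg ht]
    have h2 := h1.congr_of_eventuallyEq heq
    refine h2.congr_deriv ?_
    rw [abs_of_neg hx]
    have : (-x) ^ (p - 2 + 1) = (-x) ^ (p-2) * (-x) := Real.rpow_add_one hne _
    have h3 : p - 2 + 1 = p - 1 := by ring
    rw [h3] at this
    rw [this]; ring
  · subst hx
    have : p * |(0:ℝ)| ^ (p - 2) * 0 = 0 := by ring
    rw [this]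
    rw [hasDerivAt_iff_tendsto_slope]
    have hb : Tendsto (fun t : ℝ => |t| ^ (p - 1)) (nhdsWithin 0 {(0:ℝ)}ᶜ) (nhds 0) := by
      have hc : ContinuousAt (fun s : ℝ => s ^ (p - 1)) 0 :=
        Real.continuousAt_rpow_const 0 (p - 1) (Or.inr (by linarith))
      have : Tendsto (fun t : ℝ => |t| ^ (p - 1)) (nhds 0) (nhds ((0:ℝ) ^ (p - 1))) :=
        hc.tendsto.comp (by simpa using continuous_abs.tendsto (0:ℝ))
      simp only [Real.zero_rpow (by linarith : p - 1 ≠ 0)] at this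
      exact this.mono_left nhdsWithin_le_nhds
    apply squeeze_zero_norm' _ hb
    filter_upwards [self_mem_nhdsWithin] with t ht
    have ht' : t ≠ 0 := ht
    have habs : (0:ℝ) < |t| := abs_pos.2 ht'
    have hslope : slope (fun t : ℝ => |t| ^ p) 0 t = |t| ^ p / t := by
      simp [slope_def_field, Real.zero_rpow (by linarith : p ≠ 0)]
    rw [hslope]
    have h1 : ‖|t| ^ p / t‖ = |t| ^ p / |t| := by
      rw [norm_div, Real.norm_eq_abs, Real.norm_eq_abs,
        abs_of_nonneg (Real.rpow_nonneg (abs_nonneg t) p)]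
    rw [h1, Real.rpow_sub habs, Real.rpow_one]
  · have hne : x ≠ 0 := ne_of_gt hx
    have h1 : HasDerivAt (fun t : ℝ => t ^ p) (p * x ^ (p - 1)) x :=
      Real.hasDerivAt_rpow_const (Or.inl hne)
    have heq : (fun t : ℝ => |t| ^ p) =ᶠ[nhds x] (fun t : ℝ => t ^ p) := by
      filter_upwards [Ioi_mem_nhds hx] with t ht
      rw [abs_of_pos ht]
    have h2 := h1.congr_of_eventuallyEq heq
    refine h2.congr_deriv ?_
    rw [abs_of_pos hx]
    have : x ^ (p - 2 + 1) = x ^ (p-2) * x := Real.rpow_add_one hne _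
    have h3 : p - 2 + 1 = p - 1 := by ring
    rw [h3] at this
    rw [this]; ring

lemma F_hasDerivAt {n : ℝ} (hn : 0 < n) (x : ℝ) :
    HasDerivAt (fun t => (n + 1) / (n + 2) * |t| ^ ((n + 2) / (n + 1))) (Nn n x) x := by
  set p : ℝ := (n + 2) / (n + 1) with hpdef
  have hp : 1 < p := by
    rw [hpdef, lt_div_iff₀ (by linarith)]; linarith
  have h := (absRpow_hasDerivAt hp x).const_mul ((n + 1) / (n + 2))
  refine h.congr_deriv ?_
  have h2 : p - 2 = -(n / (n + 1)) := by
    rw [hpdef]; field_simp; ring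
  have h3 : (n + 1) / (n + 2) * p = 1 := by
    rw [hpdef]; field_simp
  rw [Nn, ← h2]
  have : (n + 1) / (n + 2) * (p * |x| ^ (p - 2) * x) =
      ((n + 1) / (n + 2) * p) * (|x| ^ (p - 2) * x) := by ring
  rw [this, h3, one_mul]

/-- A priori bound on the oscillations of the second nonlinear
eigenfunction (`k = 1`, `l = 1`): if `0 < y1 < y2` are critical points of a
C¹ solution `Y` of `y·Y'' - Y' + (1/(2n+3))·y²·N_n(Y) = 0` on `(y1,y2)`,
not identically zero on `[y1,y2]`, then
`y2²·|Y(y2)|^{(n+2)/(n+1)} > y1²·|Y(y1)|^{(n+2)/(n+1)}`. -/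
theorem stmt8 (n y1 y2 : ℝ) (hn : 0 < n) (hy1 : 0 < y1) (h12 : y1 < y2)
    (Y Y' Y'' : ℝ → ℝ)
    (hY : ∀ y ∈ Set.Icc y1 y2, HasDerivWithinAt Y (Y' y) (Set.Icc y1 y2) y)
    (hY'cont : ContinuousOn Y' (Set.Icc y1 y2))
    (hY'' : ∀ y ∈ Set.Ioo y1 y2, HasDerivAt Y' (Y'' y) y)
    (heq : ∀ y ∈ Set.Ioo y1 y2,
      y * Y'' y - Y' y + (1 / (2 * n + 3)) * y ^ 2 * Nn n (Y y) = 0)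
    (hb1 : Y' y1 = 0) (hb2 : Y' y2 = 0)
    (hnz : ∃ y ∈ Set.Icc y1 y2, Y y ≠ 0) :
    y1 ^ 2 * |Y y1| ^ ((n + 2) / (n + 1)) < y2 ^ 2 * |Y y2| ^ ((n + 2) / (n + 1)) ∧
    (Y y1 ≠ 0 → (y1 / y2) ^ 2 < (|Y y2| / |Y y1|) ^ ((n + 2) / (n + 1))) := by
  set p : ℝ := (n + 2) / (n + 1) with hpdef
  have hn1 : (0:ℝ) < n + 1 := by linarith
  have hp1 : 1 < p := by rw [hpdef, lt_div_iff₀ hn1]; linarith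
  have hp0 : p ≠ 0 := by linarith
  set c : ℝ := 1 / (2 * n + 3) with hcdef
  have hc : 0 < c := by rw [hcdef]; positivity
  have hcoef : (0:ℝ) < (n + 1) / (n + 2) := by positivity
  set F : ℝ → ℝ := fun t => (n + 1) / (n + 2) * |t| ^ p with hFdef
  have hFd : ∀ x, HasDerivAt F (Nn n x) x := fun x => F_hasDerivAt hn x
  have hFcont : Continuous F := continuous_iff_continuousAt.2 fun x => (hFd x).continuousAt
  have hFnonneg : ∀ x, 0 ≤ F x := fun x =>
    mul_nonneg hcoef.le (Real.rpow_nonneg (abs_nonneg x) p)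
  have hFpos : ∀ x, x ≠ 0 → 0 < F x := fun x hx =>
    mul_pos hcoef (Real.rpow_pos_of_pos (abs_pos.2 hx) p)
  have hF0 : F 0 = 0 := by simp [hFdef, Real.zero_rpow hp0]
  set G : ℝ → ℝ := fun y => (Y' y) ^ 2 / (2 * y) + c * F (Y y) with hGdef
  have hYcont : ContinuousOn Y (Set.Icc y1 y2) := fun y hy => (hY y hy).continuousWithinAt
  have hGcont : ContinuousOn G (Set.Icc y1 y2) := by
    apply ContinuousOn.add
    · exact (hY'cont.pow 2).div (continuousOn_const.mul continuousOn_id)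
        (fun y hy => by have h := lt_of_lt_of_le hy1 hy.1; positivity)
    · exact continuousOn_const.mul (hFcont.comp_continuousOn hYcont)
  have hGderiv : ∀ y ∈ Set.Ioo y1 y2, HasDerivAt G ((Y' y) ^ 2 / (2 * y ^ 2)) y := by
    intro y hy
    have hyI : y ∈ Set.Icc y1 y2 := Set.Ioo_subset_Icc_self hy
    have hy0 : 0 < y := lt_trans hy1 hy.1
    have hYd : HasDerivAt Y (Y' y) y := (hY y hyI).hasDerivAt (Icc_mem_nhds hy.1 hy.2)
    have h1 : HasDerivAt (fun z => (Y' z) ^ 2) (2 * Y' y * Y'' y) y := by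
      have := (hY'' y hy).pow 2
      refine this.congr_deriv ?_
      norm_num
    have h2 : HasDerivAt (fun z : ℝ => 2 * z) 2 y := by
      simpa using (hasDerivAt_id y).const_mul 2
    have h2ne : 2 * y ≠ 0 := by positivity
    have h3 := h1.div h2 h2ne
    have h4 : HasDerivAt (fun z => c * F (Y z)) (c * (Nn n (Y y) * Y' y)) y :=
      ((hFd (Y y)).comp y hYd).const_mul c
    have h5 := h3.add h4
    refine h5.congr_deriv ?_
    have key : y * Y'' y = Y' y - c * y ^ 2 * Nn n (Y y) := by linarith [heq y hy]
    have hY''eq : Y'' y = (Y' y - c * y ^ 2 * Nn n (Y y)) / y := by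
      rw [eq_div_iff (ne_of_gt hy0)]; linarith [key]
    rw [hY''eq]
    field_simp
    ring
  have hGdiff : DifferentiableOn ℝ G (interior (Set.Icc y1 y2)) := by
    rw [interior_Icc]
    exact fun y hy => (hGderiv y hy).differentiableAt.differentiableWithinAt
  have hGmono : MonotoneOn G (Set.Icc y1 y2) := by
    apply monotoneOn_of_deriv_nonneg (convex_Icc y1 y2) hGcont hGdiff
    intro y hy
    rw [interior_Icc] at hy
    rw [(hGderiv y hy).deriv]
    have hy0 : 0 < y := lt_trans hy1 hy.1
    positivity
  have hGnonneg : ∀ y ∈ Set.Icc y1 y2, 0 ≤ G y := by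
    intro y hy
    have hy0 : 0 < y := lt_of_lt_of_le hy1 hy.1
    have h1 : 0 ≤ (Y' y) ^ 2 / (2 * y) := by positivity
    have h2 : 0 ≤ c * F (Y y) := mul_nonneg hc.le (hFnonneg _)
    simp only [hGdef]
    linarith
  have hG1 : G y1 = c * F (Y y1) := by simp [hGdef, hb1]
  have hG2 : G y2 = c * F (Y y2) := by simp [hGdef, hb2]
  have hmem1 : y1 ∈ Set.Icc y1 y2 := Set.left_mem_Icc.2 h12.le
  have hmem2 : y2 ∈ Set.Icc y1 y2 := Set.right_mem_Icc.2 h12.le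
  have hle : F (Y y1) ≤ F (Y y2) := by
    have h := hGmono hmem1 hmem2 h12.le
    rw [hG1, hG2] at h
    exact le_of_mul_le_mul_left h hc
  have hy2ne : Y y2 ≠ 0 := by
    intro h0
    have hG2z : G y2 = 0 := by rw [hG2, h0, hF0, mul_zero]
    obtain ⟨z, hz, hzne⟩ := hnz
    have hGz0 : G z = 0 := by
      have h := hGmono hz hmem2 hz.2
      rw [hG2z] at h
      exact le_antisymm h (hGnonneg z hz)
    have hz0 : 0 < z := lt_of_lt_of_le hy1 hz.1
    have h1 : 0 ≤ (Y' z) ^ 2 / (2 * z) := by positivity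
    have h2 : 0 ≤ F (Y z) := hFnonneg _
    have hGz : (Y' z) ^ 2 / (2 * z) + c * F (Y z) = 0 := hGz0
    have hFz : F (Y z) ≤ 0 := by nlinarith
    exact absurd (lt_of_lt_of_le (hFpos _ hzne) hFz) (lt_irrefl 0)
  have habs2 : 0 < |Y y2| := abs_pos.2 hy2ne
  have hpow2 : 0 < |Y y2| ^ p := Real.rpow_pos_of_pos habs2 p
  have hle' : |Y y1| ^ p ≤ |Y y2| ^ p := by
    simp only [hFdef] at hle
    exact le_of_mul_le_mul_left hle hcoef
  have hsq : y1 ^ 2 < y2 ^ 2 := by nlinarith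
  have main : y1 ^ 2 * |Y y1| ^ p < y2 ^ 2 * |Y y2| ^ p := by
    calc y1 ^ 2 * |Y y1| ^ p ≤ y1 ^ 2 * |Y y2| ^ p :=
          mul_le_mul_of_nonneg_left hle' (sq_nonneg y1)
      _ < y2 ^ 2 * |Y y2| ^ p := mul_lt_mul_of_pos_right hsq hpow2
  have hy2pos : 0 < y2 := lt_trans hy1 h12
  refine ⟨main, ?_⟩
  intro h1ne
  have habs1 : 0 < |Y y1| := abs_pos.2 h1ne
  have hpow1 : 0 < |Y y1| ^ p := Real.rpow_pos_of_pos habs1 p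
  rw [div_pow, Real.div_rpow (abs_nonneg _) (abs_nonneg _),
    div_lt_div_iff₀ (by positivity) hpow1]
  nlinarith [main]
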